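/- Let f_+, f_-, a_+, a_- : ℝ → ℝ be continuous with f_± bounded and integrable and a_± bounded, nonnegative, compactly supported. Define Da_±(t,∞) = ∫_t^∞ a_±(r) dr and Da_∓(t,l) = ∫_t^l a_∓(r) dr, and set G_±(l) = ∫_{-∞}^l f_∓(t) exp(−Da_∓(t,l) − Da_±(l,∞)) dt + ∫_l^∞ f_±(t) exp(−Da_±(t,∞)) dt. Then G_± is differentiable and G_±'(l) = ∓(a_-(l) − a_+(l)) ∫_{-∞}^l f_∓(t) exp(−Da_∓(t,l) − Da_±(l,∞)) dt ± (f_-(l) − f_+(l)) exp(−Da_±(l,∞)). -/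

import Mathlib

open MeasureTheory Set

/-- FTC for the primitive `x ↦ ∫ t in Iic x, h t`. -/
lemma aux_primitive (h : ℝ → ℝ) (hc : Continuous h) (hi : Integrable h) (x : ℝ) :
    HasDerivAt (fun x => ∫ t in Iic x, h t) (h x) x := by
  have heq : (fun x => ∫ t in Iic x, h t)
      = fun x => (∫ t in Iic (0:ℝ), h t) + ∫ t in (0:ℝ)..x, h t := by
    funext y
    rw [← intervalIntegral.integral_Iic_sub_Iic hi.integrableOn hi.integrableOn]
    ring
  rw [heq]
  exact (intervalIntegral.integral_hasDerivAt_right hi.intervalIntegrable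
    (hc.stronglyMeasurableAtFilter _ _) hc.continuousAt).const_add _

lemma aux_main (f g a b : ℝ → ℝ)
    (hfc : Continuous f) (hgc : Continuous g)
    (hfi : Integrable f) (hgi : Integrable g)
    (hac : Continuous a) (hbc : Continuous b)
    (hann : ∀ t, 0 ≤ a t) (hbnn : ∀ t, 0 ≤ b t)
    (has : HasCompactSupport a) (hbs : HasCompactSupport b) (l : ℝ) :
    HasDerivAt (fun l => (∫ t in Iio l, g t * Real.exp (-(∫ r in t..l, b r) - ∫ r in Ioi l, a r))
        + ∫ t in Ioi l, f t * Real.exp (-(∫ r in Ioi t, a r)))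
      (-(b l - a l) * (∫ t in Iio l, g t * Real.exp (-(∫ r in t..l, b r) - ∫ r in Ioi l, a r))
        + (g l - f l) * Real.exp (-(∫ r in Ioi l, a r))) l := by
  have hai : Integrable a := hac.integrable_of_hasCompactSupport has
  have hbi : Integrable b := hbc.integrable_of_hasCompactSupport hbs
  set Da : ℝ → ℝ := fun x => ∫ r in Ioi x, a r with hDa
  set Db : ℝ → ℝ := fun x => ∫ r in Ioi x, b r with hDb
  have hDaIic : ∀ x, Da x = (∫ r, a r) - ∫ r in Iic x, a r := fun x => by
    rw [← intervalIntegral.integral_Iic_add_Ioi hai.integrableOn hai.integrableOn]; ring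
  have hDbIic : ∀ x, Db x = (∫ r, b r) - ∫ r in Iic x, b r := fun x => by
    rw [← intervalIntegral.integral_Iic_add_Ioi hbi.integrableOn hbi.integrableOn]; ring
  have hDa' : ∀ x, HasDerivAt Da (-(a x)) x := fun x => by
    have : HasDerivAt (fun x => (∫ r, a r) - ∫ r in Iic x, a r) (-(a x)) x :=
      (aux_primitive a hac hai x).const_sub _
    exact this.congr_of_eventuallyEq (Filter.Eventually.of_forall fun y => hDaIic y)
  have hDb' : ∀ x, HasDerivAt Db (-(b x)) x := fun x => by
    have : HasDerivAt (fun x => (∫ r, b r) - ∫ r in Iic x, b r) (-(b x)) x :=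
      (aux_primitive b hbc hbi x).const_sub _
    exact this.congr_of_eventuallyEq (Filter.Eventually.of_forall fun y => hDbIic y)
  have hDac : Continuous Da := by
    have : Differentiable ℝ Da := fun x => (hDa' x).differentiableAt
    exact this.continuous
  have hDbc : Continuous Db := by
    have : Differentiable ℝ Db := fun x => (hDb' x).differentiableAt
    exact this.continuous
  set h : ℝ → ℝ := fun t => g t * Real.exp (-(Db t)) with hh
  set k : ℝ → ℝ := fun t => f t * Real.exp (-(Da t)) with hk
  have hhc : Continuous h := hgc.mul (hDbc.neg.rexp)
  have hkc : Continuous k := hfc.mul (hDac.neg.rexp)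
  have hhi : Integrable h := by
    have := hgi.bdd_mul (hDbc.neg.rexp).aestronglyMeasurable
      (c := 1) (Filter.Eventually.of_forall fun x => by
        rw [Real.norm_eq_abs, abs_of_pos (Real.exp_pos _)]
        exact Real.exp_le_one_iff.mpr (neg_nonpos.mpr
          (setIntegral_nonneg measurableSet_Ioi fun r _ => hbnn r)))
    simpa [h, mul_comm] using this
  have hki : Integrable k := by
    have := hfi.bdd_mul (hDac.neg.rexp).aestronglyMeasurable
      (c := 1) (Filter.Eventually.of_forall fun x => by
        rw [Real.norm_eq_abs, abs_of_pos (Real.exp_pos _)]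
        exact Real.exp_le_one_iff.mpr (neg_nonpos.mpr
          (setIntegral_nonneg measurableSet_Ioi fun r _ => hann r)))
    simpa [k, mul_comm] using this
  have hIb : ∀ t x : ℝ, (∫ r in t..x, b r) = Db t - Db x := fun t x => by
    rw [← intervalIntegral.integral_Iic_sub_Iic hbi.integrableOn hbi.integrableOn,
      hDbIic, hDbIic]; ring
  have h1 : ∀ x : ℝ, (∫ t in Iio x, g t * Real.exp (-(∫ r in t..x, b r) - Da x))
      = Real.exp (Db x - Da x) * ∫ t in Iic x, h t := by
    intro x
    rw [integral_Iic_eq_integral_Iio, ← integral_const_mul]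
    refine setIntegral_congr_fun measurableSet_Iio fun t _ => ?_
    rw [hIb t x, show -(Db t - Db x) - Da x = (Db x - Da x) + -(Db t) by ring, Real.exp_add]
    simp only [h]; ring
  have hfun : (fun l => (∫ t in Iio l, g t * Real.exp (-(∫ r in t..l, b r) - ∫ r in Ioi l, a r))
        + ∫ t in Ioi l, f t * Real.exp (-(∫ r in Ioi t, a r)))
      = fun x => Real.exp (Db x - Da x) * (∫ t in Iic x, h t)
        + ((∫ t, k t) - ∫ t in Iic x, k t) := by
    funext x
    have h2 : (∫ t in Ioi x, f t * Real.exp (-(Da t)))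
        = (∫ t, k t) - ∫ t in Iic x, k t := by
      rw [← intervalIntegral.integral_Iic_add_Ioi hki.integrableOn hki.integrableOn]
      simp only [k]; ring
    rw [h1 x, h2]
  rw [hfun]
  have hE : HasDerivAt (fun x => Real.exp (Db x - Da x))
      (Real.exp (Db l - Da l) * (-(b l) - -(a l))) l := ((hDb' l).sub (hDa' l)).exp
  have hH : HasDerivAt (fun x => ∫ t in Iic x, h t) (h l) l := aux_primitive h hhc hhi l
  have hK : HasDerivAt (fun x => (∫ t, k t) - ∫ t in Iic x, k t) (-(k l)) l :=
    (aux_primitive k hkc hki l).const_sub _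
  have hG := (hE.mul hH).add hK
  refine hG.congr_deriv ?_
  symm
  rw [h1 l]
  have h3 : Real.exp (Db l - Da l) * Real.exp (-(Db l)) = Real.exp (-(Da l)) := by
    rw [← Real.exp_add]; ring_nf
  simp only [h, k]
  rw [show Real.exp (-∫ (r : ℝ) in Ioi l, a r) = Real.exp (-(Da l)) from rfl]
  linear_combination (-(g l)) * h3

/-- Equation (eq,edged1): derivative in the translation parameter `l` of the one-sided
limits `G_±` of the attenuated Radon transform along a straight edge. -/
theorem stmt_1
    (fP fM aP aM : ℝ → ℝ)
    (hfPc : Continuous fP) (hfMc : Continuous fM)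
    (hfPi : Integrable fP) (hfMi : Integrable fM)
    (hfPb : ∃ C, ∀ t, |fP t| ≤ C) (hfMb : ∃ C, ∀ t, |fM t| ≤ C)
    (haPc : Continuous aP) (haMc : Continuous aM)
    (haPnn : ∀ t, 0 ≤ aP t) (haMnn : ∀ t, 0 ≤ aM t)
    (haPs : HasCompactSupport aP) (haMs : HasCompactSupport aM)
    (DaP DaM : ℝ → ℝ)
    (hDaP : DaP = fun t => ∫ r in Set.Ioi t, aP r)
    (hDaM : DaM = fun t => ∫ r in Set.Ioi t, aM r)
    (GP GM : ℝ → ℝ)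
    (hGP : GP = fun l => (∫ t in Set.Iio l, fM t * Real.exp (-(∫ r in t..l, aM r) - DaP l))
        + ∫ t in Set.Ioi l, fP t * Real.exp (-(DaP t)))
    (hGM : GM = fun l => (∫ t in Set.Iio l, fP t * Real.exp (-(∫ r in t..l, aP r) - DaM l))
        + ∫ t in Set.Ioi l, fM t * Real.exp (-(DaM t)))
    (l : ℝ) :
    HasDerivAt GP
      (-(aM l - aP l) * (∫ t in Set.Iio l, fM t * Real.exp (-(∫ r in t..l, aM r) - DaP l))
        + (fM l - fP l) * Real.exp (-(DaP l))) l
    ∧ HasDerivAt GM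
      ((aM l - aP l) * (∫ t in Set.Iio l, fP t * Real.exp (-(∫ r in t..l, aP r) - DaM l))
        - (fM l - fP l) * Real.exp (-(DaM l))) l := by
  subst hDaP hDaM hGP hGM
  constructor
  · exact aux_main fP fM aP aM hfPc hfMc hfPi hfMi haPc haMc haPnn haMnn haPs haMs l
  · have H := aux_main fM fP aM aP hfMc hfPc hfMi hfPi haMc haPc haMnn haPnn haMs haPs l
    have e : (aM l - aP l) *
          (∫ t in Set.Iio l, fP t * Real.exp (-(∫ r in t..l, aP r) - ∫ r in Set.Ioi l, aM r))
        - (fM l - fP l) * Real.exp (-(∫ r in Set.Ioi l, aM r))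
      = -(aP l - aM l) *
          (∫ t in Set.Iio l, fP t * Real.exp (-(∫ r in t..l, aP r) - ∫ r in Set.Ioi l, aM r))
        + (fP l - fM l) * Real.exp (-(∫ r in Set.Ioi l, aM r)) := by ring
    rw [e]
    exact H
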